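/- Let m ≥ 3 be an odd integer and let α be a (real) root of the polynomial x² − mx − 2. Then α is equivalent to α/2 and α is equivalent to (α+1)/2. -/

import Mathlib

open Filter

/-- Partial quotients of the continued fraction expansion: `cfA α n` is `a_n(α)`. -/
noncomputable def cfA : ℝ → ℕ → ℤ
  | α, 0 => ⌊α⌋
  | α, n + 1 => cfA (Int.fract α)⁻¹ n

/-- `M(α) = sup_{n ≥ 1} a_n(α)` as an element of `ℕ∞`. -/
noncomputable def Mq (α : ℝ) : ℕ∞ := ⨆ n : ℕ, ((cfA α (n + 1)).toNat : ℕ∞)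

/-- `B(α) = limsup_{n → ∞} a_n(α)` as an element of `ℕ∞`. -/
noncomputable def Bq (α : ℝ) : ℕ∞ := limsup (fun n => ((cfA α n).toNat : ℕ∞)) atTop

/-- Distance from a real number to the nearest integer. -/
noncomputable def nearestDist (x : ℝ) : ℝ := |x - round x|

/-- Complete quotients of the continued fraction expansion. -/
noncomputable def cq (α : ℝ) : ℕ → ℝ
  | 0 => α
  | n + 1 => (Int.fract (cq α n))⁻¹

/-- Shifted convergent numerators: `cfP α (n+1) = p_n`, `cfP α 0 = p_{-1} = 1`. -/
noncomputable def cfP (α : ℝ) : ℕ → ℤ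
  | 0 => 1
  | 1 => ⌊α⌋
  | n + 2 => cfA α (n + 1) * cfP α (n + 1) + cfP α n

/-- Shifted convergent denominators: `cfQ α (n+1) = q_n`, `cfQ α 0 = q_{-1} = 0`. -/
noncomputable def cfQ (α : ℝ) : ℕ → ℤ
  | 0 => 0
  | 1 => 1
  | n + 2 => cfA α (n + 1) * cfQ α (n + 1) + cfQ α n

/-- Two reals are equivalent if related by an integer Möbius map of determinant `±1`. -/
def CfEquiv (x y : ℝ) : Prop :=
  ∃ a b c d : ℤ, (a * d - b * c = 1 ∨ a * d - b * c = -1) ∧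
    y = ((a : ℝ) * x + b) / ((c : ℝ) * x + d)

/-- For odd `m ≥ 3` and `α` a real root of `x² - mx - 2`, we have `α ∼ α/2` and
`α ∼ (α+1)/2`. -/
theorem stmt11 (m : ℤ) (hodd : Odd m) (hm : 3 ≤ m) (α : ℝ)
    (hroot : α ^ 2 - (m : ℝ) * α - 2 = 0) :
    CfEquiv α (α / 2) ∧ CfEquiv α ((α + 1) / 2) := by
  obtain ⟨k, hk⟩ := hodd
  have hα0 : α ≠ 0 := by
    intro h; rw [h] at hroot; norm_num at hroot
  have hαm : α - (m : ℝ) ≠ 0 := by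
    intro h
    have : α = (m : ℝ) := by linarith
    rw [this] at hroot; nlinarith
  constructor
  · refine ⟨0, 1, 1, -m, Or.inr (by ring), ?_⟩
    push_cast
    rw [div_eq_div_iff (by norm_num) (by simpa [sub_eq_add_neg] using hαm)]
    nlinarith [hroot]
  · refine ⟨k + 1, 1, 1, 0, Or.inr (by ring), ?_⟩
    push_cast
    rw [div_eq_div_iff (by norm_num) (by simpa using hα0)]
    have hkr : (m : ℝ) = 2 * k + 1 := by exact_mod_cast congrArg Int.cast hk
    linear_combination hroot + α * hkr
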